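/- arXiv:1608.03413 — 3 statements merged into one kernel-verified Lean document; each statement's English description precedes it below -/
import Mathlib

section
/- For any two sets L, R of surreal numbers such that every element of L is less than every element of R, there exists a surreal number a with L < a < R (i.e., every element of L is less than a and a is less than every element of R). -/
universe u

namespace SetTheory

/-- Pre-games, as in Mathlib's former `SetTheory.PGame` (removed from Mathlib). -/
inductive PGame : Type (u + 1)
  | mk : ∀ α β : Type u, (α → PGame) → (β → PGame) → PGame

namespace PGame

/-- The left options of a pre-game. -/
def LeftMoves : PGame.{u} → Type u
  | mk l _ _ _ => l

/-- The right options of a pre-game. -/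
def RightMoves : PGame.{u} → Type u
  | mk _ r _ _ => r

/-- A left move. -/
def moveLeft : ∀ g : PGame.{u}, LeftMoves g → PGame.{u}
  | mk _ _ L _ => L

/-- A right move. -/
def moveRight : ∀ g : PGame.{u}, RightMoves g → PGame.{u}
  | mk _ _ _ R => R

/-- Auxiliary: for fixed `x` (given through `FL i y := y ≤ xL i` and `GR j y := xR j ≤ y`),
computes the pair `(x ≤ y, y ≤ x)` by recursion on `y`. -/
def leAux {xl xr : Type u} (FL : xl → PGame.{u} → Prop) (GR : xr → PGame.{u} → Prop) :
    PGame.{u} → Prop × Prop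
  | mk _ _ yL yR =>
    ((∀ i, ¬ FL i (mk _ _ yL yR)) ∧ ∀ j, ¬ (leAux FL GR (yR j)).2,
     (∀ i, ¬ (leAux FL GR (yL i)).1) ∧ ∀ j, ¬ GR j (mk _ _ yL yR))

/-- Auxiliary: the pair of predicates `(x ≤ ·, · ≤ x)`. -/
def leLe : PGame.{u} → (PGame.{u} → Prop) × (PGame.{u} → Prop)
  | mk _ _ xL xR =>
    (fun y => (leAux (fun i => (leLe (xL i)).2) (fun j => (leLe (xR j)).1) y).1,
     fun y => (leAux (fun i => (leLe (xL i)).2) (fun j => (leLe (xR j)).1) y).2)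

/-- The order on pre-games: `x ≤ y` iff no left option of `x` is `≥ y` and no right option of
`y` is `≤ x`. -/
instance : LE PGame.{u} :=
  ⟨fun x y => (leLe x).1 y⟩

theorem leLe_symm (a b : PGame.{u}) :
    ((leLe a).2 b ↔ (leLe b).1 a) ∧ ((leLe a).1 b ↔ (leLe b).2 a) := by
  induction a generalizing b with
  | mk al ar aL aR ihL ihR =>
    induction b with
    | mk bl br bL bR jhL jhR =>
      constructor
      · show ((∀ i, ¬ (leLe (mk al ar aL aR)).1 (bL i)) ∧
            ∀ j, ¬ (leLe (aR j)).1 (mk bl br bL bR)) ↔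
          ((∀ i, ¬ (leLe (bL i)).2 (mk al ar aL aR)) ∧
            ∀ j, ¬ (leLe (mk bl br bL bR)).2 (aR j))
        exact and_congr (forall_congr' fun i => not_congr (jhL i).2)
          (forall_congr' fun j => not_congr (ihR j (mk bl br bL bR)).2)
      · show ((∀ i, ¬ (leLe (aL i)).2 (mk bl br bL bR)) ∧
            ∀ j, ¬ (leLe (mk al ar aL aR)).2 (bR j)) ↔
          ((∀ i, ¬ (leLe (mk bl br bL bR)).1 (aL i)) ∧
            ∀ j, ¬ (leLe (bR j)).1 (mk al ar aL aR))
        exact and_congr (forall_congr' fun i => not_congr (ihL i (mk bl br bL bR)).1)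
          (forall_congr' fun j => not_congr (jhR j).1)

theorem mk_le_mk {xl xr yl yr : Type u} {xL : xl → PGame.{u}} {xR : xr → PGame.{u}}
    {yL : yl → PGame.{u}} {yR : yr → PGame.{u}} :
    mk xl xr xL xR ≤ mk yl yr yL yR ↔
      (∀ i, ¬ mk yl yr yL yR ≤ xL i) ∧ ∀ j, ¬ yR j ≤ mk xl xr xL xR := by
  show ((∀ i, ¬ (leLe (xL i)).2 (mk yl yr yL yR)) ∧
      ∀ j, ¬ (leLe (mk xl xr xL xR)).2 (yR j)) ↔ _
  exact and_congr (forall_congr' fun i => not_congr (leLe_symm (xL i) (mk yl yr yL yR)).1)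
    (forall_congr' fun j => not_congr (leLe_symm (mk xl xr xL xR) (yR j)).1)

theorem le_def {x y : PGame.{u}} :
    x ≤ y ↔ (∀ i, ¬ y ≤ x.moveLeft i) ∧ ∀ j, ¬ y.moveRight j ≤ x := by
  cases x
  cases y
  exact mk_le_mk

theorem le_refl_aux (x : PGame.{u}) : x ≤ x := by
  induction x with
  | mk xl xr xL xR ihL ihR =>
    exact mk_le_mk.2 ⟨fun i h => (le_def.1 h).1 i (ihL i), fun j h => (le_def.1 h).2 j (ihR j)⟩

theorem le_trans_aux (x y z : PGame.{u}) :
    (x ≤ y → y ≤ z → x ≤ z) ∧ (y ≤ z → z ≤ x → y ≤ x) ∧ (z ≤ x → x ≤ y → z ≤ y) := by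
  induction x generalizing y z with
  | mk xl xr xL xR ihxL ihxR =>
  induction y generalizing z with
  | mk yl yr yL yR ihyL ihyR =>
  induction z with
  | mk zl zr zL zR ihzL ihzR =>
    refine ⟨fun hxy hyz => ?_, fun hyz hzx => ?_, fun hzx hxy => ?_⟩
    · refine mk_le_mk.2 ⟨fun i h => ?_, fun k h => ?_⟩
      · exact (mk_le_mk.1 hxy).1 i ((ihxL i _ _).2.1 hyz h)
      · exact (mk_le_mk.1 hyz).2 k ((ihzR k).2.2 h hxy)
    · refine mk_le_mk.2 ⟨fun j h => ?_, fun i h => ?_⟩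
      · exact (mk_le_mk.1 hyz).1 j ((ihyL j _).2.2 hzx h)
      · exact (mk_le_mk.1 hzx).2 i ((ihxR i _ _).1 h hyz)
    · refine mk_le_mk.2 ⟨fun k h => ?_, fun j h => ?_⟩
      · exact (mk_le_mk.1 hzx).1 k ((ihzL k).1 hxy h)
      · exact (mk_le_mk.1 hxy).2 j ((ihyR j _).2.1 h hzx)

/-- Pre-games form a preorder; `x < y ↔ x ≤ y ∧ ¬ y ≤ x`, as in Mathlib's former instance. -/
instance : Preorder PGame.{u} where
  le_refl x := le_refl_aux x
  le_trans x y z := (le_trans_aux x y z).1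

/-- A pre-game is numeric if all its left options are less than all its right options,
and all options are numeric. -/
def Numeric : PGame.{u} → Prop
  | ⟨_, _, L, R⟩ => (∀ i j, L i < R j) ∧ (∀ i, Numeric (L i)) ∧ ∀ j, Numeric (R j)

/-- Equivalence of pre-games: `x ≤ y ∧ y ≤ x`. -/
def Equiv (x y : PGame.{u}) : Prop :=
  x ≤ y ∧ y ≤ x

/-- The setoid of equivalence on numeric pre-games. -/
instance numericSetoid : Setoid (Subtype Numeric.{u}) where
  r x y := Equiv x.1 y.1
  iseqv := ⟨fun _ => ⟨le_refl _, le_refl _⟩, fun h => ⟨h.2, h.1⟩,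
    fun h₁ h₂ => ⟨le_trans h₁.1 h₂.1, le_trans h₂.2 h₁.2⟩⟩

end PGame

end SetTheory

open SetTheory

/-- The type of surreal numbers: numeric pre-games modulo equivalence
(Mathlib's former `Surreal`). -/
def Surreal : Type (u + 1) :=
  Quotient PGame.numericSetoid.{u}

namespace Surreal

/-- The order `<` on surreal numbers, lifted from pre-games. -/
instance : LT Surreal.{u} :=
  ⟨Quotient.lift₂ (fun x y : Subtype PGame.Numeric.{u} => x.1 < y.1) (fun _ _ _ _ hx hy =>
    propext ⟨fun h => lt_of_le_of_lt hx.2 (lt_of_lt_of_le h hy.1),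
      fun h => lt_of_le_of_lt hx.1 (lt_of_lt_of_le h hy.2)⟩)⟩

end Surreal

namespace SetTheory.PGame

theorem Numeric.mk {x : PGame.{u}} (h1 : ∀ i j, x.moveLeft i < x.moveRight j)
    (h2 : ∀ i, (x.moveLeft i).Numeric) (h3 : ∀ j, (x.moveRight j).Numeric) : x.Numeric := by
  cases x
  exact ⟨h1, h2, h3⟩

theorem Numeric.moveLeft {x : PGame.{u}} (o : x.Numeric) (i : x.LeftMoves) :
    (x.moveLeft i).Numeric := by
  cases x
  exact o.2.1 i

theorem Numeric.moveRight {x : PGame.{u}} (o : x.Numeric) (j : x.RightMoves) :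
    (x.moveRight j).Numeric := by
  cases x
  exact o.2.2 j

theorem not_le_moveLeft_self (x : PGame.{u}) (i : x.LeftMoves) : ¬ x ≤ x.moveLeft i :=
  fun h => (le_def.1 h).1 i le_rfl

theorem not_moveRight_le_self (x : PGame.{u}) (j : x.RightMoves) : ¬ x.moveRight j ≤ x :=
  fun h => (le_def.1 h).2 j le_rfl

theorem numeric_opt_le (x : PGame.{u}) :
    x.Numeric → (∀ i, x.moveLeft i ≤ x) ∧ ∀ j, x ≤ x.moveRight j := by
  induction x with
  | mk xl xr xL xR ihL ihR =>
    intro o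
    obtain ⟨h1, h2, h3⟩ := o
    refine ⟨fun i => ?_, fun j => ?_⟩
    · refine le_def.2 ⟨fun k hk => ?_, fun j hj => ?_⟩
      · exact not_le_moveLeft_self (mk xl xr xL xR) i (le_trans hk ((ihL i (h2 i)).1 k))
      · exact lt_irrefl _ (lt_of_lt_of_le (h1 i j) hj)
    · refine le_def.2 ⟨fun i hi => ?_, fun k hk => ?_⟩
      · exact lt_irrefl _ (lt_of_lt_of_le (h1 i j) hi)
      · exact not_moveRight_le_self (mk xl xr xL xR) j (le_trans ((ihR j (h3 j)).2 k) hk)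

theorem Numeric.moveLeft_lt {x : PGame.{u}} (o : x.Numeric) (i : x.LeftMoves) :
    x.moveLeft i < x :=
  lt_iff_le_not_ge.2 ⟨(numeric_opt_le x o).1 i, not_le_moveLeft_self x i⟩

theorem Numeric.lt_moveRight {x : PGame.{u}} (o : x.Numeric) (j : x.RightMoves) :
    x < x.moveRight j :=
  lt_iff_le_not_ge.2 ⟨(numeric_opt_le x o).2 j, not_moveRight_le_self x j⟩

end SetTheory.PGame

namespace Surreal

def mk (x : PGame.{u}) (h : x.Numeric) : Surreal.{u} :=
  Quotient.mk _ ⟨x, h⟩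

theorem mk_lt_mk {x y : PGame.{u}} {ox : x.Numeric} {oy : y.Numeric} :
    mk x ox < mk y oy ↔ x < y :=
  Iff.rfl

theorem mk_moveLeft_lt_mk {x : PGame.{u}} (o : x.Numeric) (i : x.LeftMoves) :
    mk (x.moveLeft i) (o.moveLeft i) < mk x o :=
  o.moveLeft_lt i

theorem mk_lt_mk_moveRight {x : PGame.{u}} (o : x.Numeric) (j : x.RightMoves) :
    mk x o < mk (x.moveRight j) (o.moveRight j) :=
  o.lt_moveRight j

end Surreal

open SetTheory PGame

lemma Surreal.mk_out (a : Surreal.{u}) : Surreal.mk a.out.1 a.out.2 = a := by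
  rw [Surreal.mk]
  exact (Quotient.out_eq a)

/-- **(S1)** For any two (small) sets `L`, `R` of surreal numbers such that every member of `L`
is less than every member of `R`, there is a surreal number lying strictly between them. -/
theorem stmt0 (L R : Set Surreal.{u}) [Small.{u} L] [Small.{u} R]
    (h : ∀ l ∈ L, ∀ r ∈ R, l < r) :
    ∃ a : Surreal.{u}, (∀ l ∈ L, l < a) ∧ ∀ r ∈ R, a < r := by
  let fL : Shrink.{u} L → Surreal.{u} := fun i => ((equivShrink L).symm i : Surreal)
  let fR : Shrink.{u} R → Surreal.{u} := fun j => ((equivShrink R).symm j : Surreal)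
  let x : PGame.{u} := ⟨Shrink.{u} L, Shrink.{u} R,
    fun i => (fL i).out.1, fun j => (fR j).out.1⟩
  have hx : x.Numeric := by
    refine Numeric.mk (fun i j => ?_) (fun i => (fL i).out.2) (fun j => (fR j).out.2)
    have key : Surreal.mk (fL i).out.1 (fL i).out.2 < Surreal.mk (fR j).out.1 (fR j).out.2 := by
      rw [Surreal.mk_out, Surreal.mk_out]
      exact h _ ((equivShrink L).symm i).2 _ ((equivShrink R).symm j).2
    exact Surreal.mk_lt_mk.mp key
  refine ⟨Surreal.mk x hx, fun l hl => ?_, fun r hr => ?_⟩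
  · have h1 : l = Surreal.mk (fL (equivShrink L ⟨l, hl⟩)).out.1
        (fL (equivShrink L ⟨l, hl⟩)).out.2 := by
      rw [Surreal.mk_out]; simp [fL]
    rw [h1]
    exact Surreal.mk_moveLeft_lt_mk hx (equivShrink L ⟨l, hl⟩)
  · have h1 : r = Surreal.mk (fR (equivShrink R ⟨r, hr⟩)).out.1
        (fR (equivShrink R ⟨r, hr⟩)).out.2 := by
      rw [Surreal.mk_out]; simp [fR]
    rw [h1]
    exact Surreal.mk_lt_mk_moveRight hx (equivShrink R ⟨r, hr⟩)
end

section
/- In a field of Hahn series R((G)) over an ordered abelian group G with real coefficients, the formal exponential of an infinitesimal series ε (defined as the sum Σ_{k≥0} ε^k / k!) is well-defined (the family (ε^k/k!) is summable) and satisfies exp(ε + δ) = exp(ε)·exp(δ) for infinitesimal ε, δ. -/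
noncomputable section Aux13

open Finset HahnSeries HahnSeries.SummableFamily

namespace Aux13

variable {Γ : Type*} [AddCommGroup Γ] [LinearOrder Γ] [IsOrderedAddMonoid Γ]

/-- Scale a summable family by a sequence of real scalars. -/
def smulFam (c : ℕ → ℝ) (s : SummableFamily Γ ℝ ℕ) : SummableFamily Γ ℝ ℕ where
  toFun k := c k • s k
  isPWO_iUnion_support' := s.isPWO_iUnion_support.mono <| Set.iUnion_mono fun k g hg => by
    simp only [HahnSeries.mem_support, HahnSeries.coeff_smul] at hg ⊢
    exact fun h => hg (by simp [h])
  finite_co_support' g := (s.finite_co_support g).subset fun k hk => by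
    simp only [Set.mem_setOf_eq, HahnSeries.coeff_smul] at hk ⊢
    exact fun h => hk (by simp [h])

@[simp] lemma smulFam_apply (c : ℕ → ℝ) (s : SummableFamily Γ ℝ ℕ) (k : ℕ) :
    smulFam c s k = c k • s k := rfl

lemma pos_orderTop_of_support {ε : HahnSeries Γ ℝ} (h : ∀ g ∈ ε.support, 0 < g) :
    0 < ε.orderTop := by
  by_cases h0 : ε = 0
  · simp [h0]
  · rw [HahnSeries.orderTop_of_ne_zero h0]
    exact_mod_cast h _ (ε.isWF_support.min_mem (HahnSeries.support_nonempty_iff.2 h0))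

/-- The family `k ↦ ε^k / k!`. -/
def expFam (ε : HahnSeries Γ ℝ) (hε : 0 < ε.orderTop) : SummableFamily Γ ℝ ℕ :=
  smulFam (fun k => (k.factorial : ℝ)⁻¹) (SummableFamily.powers ε)

@[simp] lemma expFam_apply (ε : HahnSeries Γ ℝ) (hε : 0 < ε.orderTop) (k : ℕ) :
    expFam ε hε k = (k.factorial : ℝ)⁻¹ • ε ^ k := by
  simp [expFam, hε]

lemma coeff_sum (s : Finset (ℕ × ℕ)) (T : (ℕ × ℕ) → HahnSeries Γ ℝ) (g : Γ) :
    (∑ p ∈ s, T p).coeff g = ∑ p ∈ s, (T p).coeff g :=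
  map_sum (⟨⟨fun x => HahnSeries.coeff x g, rfl⟩, fun _ _ => rfl⟩ :
    HahnSeries Γ ℝ →+ ℝ) T s

instance : IsScalarTower ℝ (HahnSeries Γ ℝ) (HahnSeries Γ ℝ) :=
  ⟨fun a x y => by
    rw [smul_eq_mul, smul_eq_mul, ← HahnSeries.single_zero_mul_eq_smul,
      ← HahnSeries.single_zero_mul_eq_smul, mul_assoc]⟩

instance : SMulCommClass ℝ (HahnSeries Γ ℝ) (HahnSeries Γ ℝ) :=
  ⟨fun a x y => by
    rw [smul_eq_mul, smul_eq_mul, ← HahnSeries.single_zero_mul_eq_smul,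
      ← HahnSeries.single_zero_mul_eq_smul]
    ring⟩

/-- Collapse a summable family indexed by `ℕ × ℕ` along antidiagonals. -/
def diag (T : SummableFamily Γ ℝ (ℕ × ℕ)) : SummableFamily Γ ℝ ℕ where
  toFun n := ∑ p ∈ Finset.HasAntidiagonal.antidiagonal n, T p
  isPWO_iUnion_support' := T.isPWO_iUnion_support.mono <| Set.iUnion_subset fun n g hg => by
    simp only [HahnSeries.mem_support] at hg
    have : ∃ p ∈ Finset.HasAntidiagonal.antidiagonal n, (T p).coeff g ≠ 0 := by
      by_contra hc
      push_neg at hc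
      apply hg
      rw [coeff_sum]
      exact Finset.sum_eq_zero fun p hp => hc p hp
    obtain ⟨p, _, hp⟩ := this
    exact Set.mem_iUnion.2 ⟨p, hp⟩
  finite_co_support' g := by
    apply ((T.finite_co_support g).image (fun p => p.1 + p.2)).subset
    intro n hn
    simp only [Set.mem_setOf_eq] at hn
    have : ∃ p ∈ Finset.HasAntidiagonal.antidiagonal n, (T p).coeff g ≠ 0 := by
      by_contra hc
      push_neg at hc
      apply hn
      rw [coeff_sum]
      exact Finset.sum_eq_zero fun p hp => hc p hp
    obtain ⟨p, hp, hp0⟩ := this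
    exact ⟨p, hp0, (Finset.HasAntidiagonal.mem_antidiagonal.1 hp)⟩

lemma hsum_diag (T : SummableFamily Γ ℝ (ℕ × ℕ)) : (diag T).hsum = T.hsum := by
  ext g
  classical
  set F : Finset (ℕ × ℕ) := (T.finite_co_support g).toFinset with hF
  have hmemF : ∀ p : ℕ × ℕ, p ∈ F ↔ (T p).coeff g ≠ 0 := by
    intro p; exact Set.Finite.mem_toFinset _
  set N : Finset ℕ := F.image (fun p => p.1 + p.2) with hN
  have hdiag : ∀ n, (diag T) n = ∑ p ∈ Finset.HasAntidiagonal.antidiagonal n, T p := fun _ => rfl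
  have h1 : (diag T).hsum.coeff g = ∑ n ∈ N, ((diag T) n).coeff g := by
    apply coeff_hsum_eq_sum_of_subset
    intro n hn
    simp only [Set.mem_setOf_eq] at hn
    rw [hdiag, coeff_sum] at hn
    obtain ⟨p, hp, hp0⟩ := Finset.exists_ne_zero_of_sum_ne_zero hn
    exact Finset.mem_image.2 ⟨p, (hmemF p).2 hp0, Finset.HasAntidiagonal.mem_antidiagonal.1 hp⟩
  have h2 : T.hsum.coeff g = ∑ p ∈ F, (T p).coeff g := by
    apply coeff_hsum_eq_sum_of_subset
    intro p hp
    simp only [Set.mem_setOf_eq] at hp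
    exact (hmemF p).2 hp
  rw [h1, h2]
  have h3 : ∀ n ∈ N, ((diag T) n).coeff g = ∑ p ∈ Finset.HasAntidiagonal.antidiagonal n, (T p).coeff g :=
    fun n _ => by rw [hdiag, coeff_sum]
  rw [Finset.sum_congr rfl h3, ← Finset.sum_biUnion]
  · apply (Finset.sum_subset ?_ ?_).symm
    · intro p hp
      refine Finset.mem_biUnion.2 ⟨p.1 + p.2, Finset.mem_image.2 ⟨p, hp, rfl⟩, ?_⟩
      simp [Finset.HasAntidiagonal.mem_antidiagonal]
    · intro p _ hp
      by_contra h
      exact hp ((hmemF p).2 h)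
  · intro m hm n hn hmn
    apply Finset.disjoint_left.2
    intro p hpm hpn
    exact hmn ((Finset.HasAntidiagonal.mem_antidiagonal.1 hpm).symm.trans (Finset.HasAntidiagonal.mem_antidiagonal.1 hpn))

lemma expFam_add (ε δ : HahnSeries Γ ℝ) (hε : 0 < ε.orderTop) (hδ : 0 < δ.orderTop)
    (hεδ : 0 < (ε + δ).orderTop) :
    expFam (ε + δ) hεδ = diag (SummableFamily.smul (expFam ε hε) (expFam δ hδ)) := by
  apply SummableFamily.ext
  intro n
  have hdiag : (diag (SummableFamily.smul (expFam ε hε) (expFam δ hδ))) n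
      = ∑ p ∈ Finset.HasAntidiagonal.antidiagonal n, (SummableFamily.smul (expFam ε hε) (expFam δ hδ)) p := rfl
  rw [hdiag]
  have hterm : ∀ p : ℕ × ℕ, (SummableFamily.smul (expFam ε hε) (expFam δ hδ)) p
      = ((p.1.factorial : ℝ)⁻¹ * (p.2.factorial : ℝ)⁻¹) • (ε ^ p.1 * δ ^ p.2) := by
    intro p
    have : (SummableFamily.smul (expFam ε hε) (expFam δ hδ)) p
        = (expFam ε hε p.1) * (expFam δ hδ p.2) := by
      rw [SummableFamily.smul_toFun, HahnSeries.of_symm_smul_of_eq_mul]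
    rw [this, expFam_apply, expFam_apply, smul_mul_smul_comm]
  rw [Finset.sum_congr rfl fun p _ => hterm p]
  rw [Finset.Nat.sum_antidiagonal_eq_sum_range_succ_mk]
  rw [expFam_apply, add_pow]
  rw [Finset.smul_sum]
  refine Finset.sum_congr rfl fun k hk => ?_
  have hkn : k ≤ n := Nat.lt_succ_iff.1 (Finset.mem_range.1 hk)
  have hcast : (ε ^ k * δ ^ (n - k) * (n.choose k : HahnSeries Γ ℝ))
      = (n.choose k : ℝ) • (ε ^ k * δ ^ (n - k)) := by
    rw [mul_comm, ← nsmul_eq_mul, ← Nat.cast_smul_eq_nsmul ℝ]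
  rw [hcast, smul_smul]
  congr 1
  have hfac : (n.choose k : ℝ) * (k.factorial : ℝ) * ((n - k).factorial : ℝ)
      = (n.factorial : ℝ) := by
    exact_mod_cast congrArg (Nat.cast : ℕ → ℝ) (Nat.choose_mul_factorial_mul_factorial hkn)
  have hk0 : (k.factorial : ℝ) ≠ 0 := Nat.cast_ne_zero.2 k.factorial_ne_zero
  have hnk0 : ((n - k).factorial : ℝ) ≠ 0 := Nat.cast_ne_zero.2 (n - k).factorial_ne_zero
  have hn0 : (n.factorial : ℝ) ≠ 0 := Nat.cast_ne_zero.2 n.factorial_ne_zero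
  field_simp
  linarith [hfac]

/-- The exponential. -/
def expMap : HahnSeries Γ ℝ → HahnSeries Γ ℝ := fun ε =>
  if h : 0 < ε.orderTop then (expFam ε h).hsum else 0

lemma expMap_eq {ε : HahnSeries Γ ℝ} (h : 0 < ε.orderTop) :
    expMap ε = (expFam ε h).hsum := dif_pos h

end Aux13

end Aux13

/-- In a field of Hahn series `ℝ((G))` over an ordered abelian group `G`, the formal
exponential `exp ε = Σ_{k≥0} ε^k / k!` of an infinitesimal series `ε` (one whose support
consists only of strictly positive elements of `G`) is well defined — the family
`(ε^k / k!)_k` is summable — and satisfies `exp (ε + δ) = exp ε * exp δ` for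
infinitesimal `ε`, `δ`. -/
theorem stmt13 {Γ : Type*} [AddCommGroup Γ] [LinearOrder Γ] [IsOrderedAddMonoid Γ] :
    ∃ exp : HahnSeries Γ ℝ → HahnSeries Γ ℝ,
      ∀ ε : HahnSeries Γ ℝ, (∀ g ∈ ε.support, 0 < g) →
        (∃ S : HahnSeries.SummableFamily Γ ℝ ℕ,
            (∀ k : ℕ, S k = (k.factorial : ℝ)⁻¹ • ε ^ k) ∧ exp ε = S.hsum) ∧
        ∀ δ : HahnSeries Γ ℝ, (∀ g ∈ δ.support, 0 < g) →
          exp (ε + δ) = exp ε * exp δ := by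
  classical
  refine ⟨Aux13.expMap, fun ε hεsupp => ?_⟩
  have hε : 0 < ε.orderTop := Aux13.pos_orderTop_of_support hεsupp
  constructor
  · exact ⟨Aux13.expFam ε hε, fun k => Aux13.expFam_apply ε hε k,
      Aux13.expMap_eq hε⟩
  · intro δ hδsupp
    have hδ : 0 < δ.orderTop := Aux13.pos_orderTop_of_support hδsupp
    have hεδ : 0 < (ε + δ).orderTop := by
      apply Aux13.pos_orderTop_of_support
      intro g hg
      rw [HahnSeries.mem_support, HahnSeries.coeff_add] at hg
      by_cases h1 : ε.coeff g = 0
      · exact hδsupp g (by simpa [HahnSeries.mem_support, h1] using hg)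
      · exact hεsupp g h1
    rw [Aux13.expMap_eq hεδ, Aux13.expMap_eq hε, Aux13.expMap_eq hδ,
      Aux13.expFam_add ε δ hε hδ hεδ, Aux13.hsum_diag,
      HahnSeries.SummableFamily.smul_hsum,
      HahnSeries.of_symm_smul_of_eq_mul]
end

section
/- In an H-field, if x and y are elements with x ≻ 1 and y ≻ 1 (both infinitely large relative to the constant field) and x ≺ y, then D(x) ≺ D(y) (strong L'Hospital rule). -/
/-- An H-field: an ordered field `K` with a derivation `D` such that any element greater
than all constants has positive derivative (H1), and any element bounded by a constant is
within every positive constant of some constant (H2). The constants are `ker D`. -/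
structure HField (K : Type*) [Field K] [LinearOrder K] [IsStrictOrderedRing K] where
  D : K → K
  map_add : ∀ x y, D (x + y) = D x + D y
  leibniz : ∀ x y, D (x * y) = x * D y + y * D x
  h1 : ∀ x : K, (∀ c, D c = 0 → c < x) → 0 < D x
  h2 : ∀ x : K, (∃ c, D c = 0 ∧ |x| < c) →
    ∃ d, D d = 0 ∧ ∀ c, D c = 0 → 0 < c → |x - d| < c

/-- The dominance relation `x ≺ y` induced by the valuation whose valuation ring is the
convex hull of the constants: `c·x` is smaller than `y` in absolute value for every
constant `c`. -/
def HField.Smallo {K : Type*} [Field K] [LinearOrder K] [IsStrictOrderedRing K] (F : HField K) (x y : K) : Prop :=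
  ∀ c : K, F.D c = 0 → |c| * |x| < |y|

namespace HField

variable {K : Type*} [Field K] [LinearOrder K] [IsStrictOrderedRing K] (F : HField K)

lemma D0 : F.D 0 = 0 := by
  have h := F.map_add 0 0
  rw [add_zero] at h
  linarith

lemma D1 : F.D 1 = 0 := by
  have h := F.leibniz 1 1
  rw [mul_one, one_mul] at h
  linarith

lemma Dneg (a : K) : F.D (-a) = -F.D a := by
  have h := F.map_add a (-a)
  have h2 : a + -a = 0 := by ring
  rw [h2, F.D0] at h
  linarith

lemma Dabs (c : K) (hc : F.D c = 0) : F.D |c| = 0 := by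
  rcases abs_choice c with h | h
  · rw [h]; exact hc
  · rw [h, F.Dneg, hc, neg_zero]

lemma Dconst_mul (c x : K) (hc : F.D c = 0) : F.D (c * x) = c * F.D x := by
  rw [F.leibniz, hc]; ring

lemma key (x y : K) (hx : ∀ c, F.D c = 0 → c < x) (hy : ∀ c, F.D c = 0 → c < y)
    (hxy : F.Smallo x y) (c : K) (hc : F.D c = 0) (hc0 : 0 ≤ c) :
    c * F.D x < F.D y := by
  have hx0 : (0 : K) < x := hx 0 F.D0
  have hx1 : (1 : K) < x := hx 1 F.D1
  have hy0 : (0 : K) < y := hy 0 F.D0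
  have hgt : ∀ d, F.D d = 0 → d < y - c * x := by
    intro d hd
    have habs : F.D |d| = 0 := F.Dabs d hd
    have he : F.D (c + |d|) = 0 := by rw [F.map_add, hc, habs, add_zero]
    have he2 : F.D ((c + |d|) + (c + |d|)) = 0 := by rw [F.map_add, he, add_zero]
    have hsm := hxy ((c + |d|) + (c + |d|)) he2
    have hd0 : (0 : K) ≤ |d| := abs_nonneg d
    rw [abs_of_nonneg (by linarith : (0 : K) ≤ (c + |d|) + (c + |d|)),
      abs_of_pos hx0, abs_of_pos hy0] at hsm
    have h3 : (c + |d|) * x < y := by nlinarith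
    have h4 : |d| ≤ |d| * x := by nlinarith
    have h5 : d ≤ |d| := le_abs_self d
    nlinarith
  have hpos := F.h1 (y - c * x) hgt
  have heq : F.D (y - c * x) = F.D y - c * F.D x := by
    have h : y - c * x = y + -(c * x) := by ring
    rw [h, F.map_add, F.Dneg, F.Dconst_mul c x hc]
    ring
  linarith [heq ▸ hpos]

lemma main (x y : K) (hx : ∀ c, F.D c = 0 → c < x) (hy : ∀ c, F.D c = 0 → c < y)
    (hxy : F.Smallo x y) : F.Smallo (F.D x) (F.D y) := by
  intro c hc
  have hDx := F.h1 x hx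
  have hDy := F.h1 y hy
  have h := F.key x y hx hy hxy |c| (F.Dabs c hc) (abs_nonneg c)
  rw [abs_of_pos hDx, abs_of_pos hDy]
  exact h

end HField

/-- **Strong L'Hospital rule**: in an H-field, if `x ≻ 1`, `y ≻ 1` and `x ≺ y`,
then `D x ≺ D y`. -/
theorem stmt14 {K : Type*} [Field K] [LinearOrder K] [IsStrictOrderedRing K] (F : HField K) (x y : K)
    (hx : F.Smallo 1 x) (hy : F.Smallo 1 y) (hxy : F.Smallo x y) :
    F.Smallo (F.D x) (F.D y) := by
  have hxgt : ∀ c, F.D c = 0 → |c| < |x| := by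
    intro c hc
    have h := hx c hc
    rwa [abs_one, mul_one] at h
  have hygt : ∀ c, F.D c = 0 → |c| < |y| := by
    intro c hc
    have h := hy c hc
    rwa [abs_one, mul_one] at h
  have hx0 : x ≠ 0 := by
    intro h
    have := hxgt 0 F.D0
    simp [h] at this
  have hy0 : y ≠ 0 := by
    intro h
    have := hygt 0 F.D0
    simp [h] at this
  -- choose sign-corrected versions
  rcases hx0.lt_or_gt with hxneg | hxpos
  · rcases hy0.lt_or_gt with hyneg | hypos
    · -- x < 0, y < 0 : use -x, -y
      have h1 : ∀ c, F.D c = 0 → c < -x := fun c hc =>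
        lt_of_le_of_lt (le_abs_self c) (by have hh := hxgt c hc; rwa [abs_of_neg hxneg] at hh)
      have h2 : ∀ c, F.D c = 0 → c < -y := fun c hc =>
        lt_of_le_of_lt (le_abs_self c) (by have hh := hygt c hc; rwa [abs_of_neg hyneg] at hh)
      have h3 : F.Smallo (-x) (-y) := fun c hc => by
        rw [abs_neg, abs_neg]; exact hxy c hc
      have h := F.main (-x) (-y) h1 h2 h3
      intro c hc
      have h' := h c hc
      rwa [F.Dneg, F.Dneg, abs_neg, abs_neg] at h'
    · -- x < 0, y > 0 : use -x, y
      have h1 : ∀ c, F.D c = 0 → c < -x := fun c hc =>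
        lt_of_le_of_lt (le_abs_self c) (by have hh := hxgt c hc; rwa [abs_of_neg hxneg] at hh)
      have h2 : ∀ c, F.D c = 0 → c < y := fun c hc =>
        lt_of_le_of_lt (le_abs_self c) (by have hh := hygt c hc; rwa [abs_of_pos hypos] at hh)
      have h3 : F.Smallo (-x) y := fun c hc => by
        rw [abs_neg]; exact hxy c hc
      have h := F.main (-x) y h1 h2 h3
      intro c hc
      have h' := h c hc
      rwa [F.Dneg, abs_neg] at h'
  · rcases hy0.lt_or_gt with hyneg | hypos
    · -- x > 0, y < 0 : use x, -y
      have h1 : ∀ c, F.D c = 0 → c < x := fun c hc =>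
        lt_of_le_of_lt (le_abs_self c) (by have hh := hxgt c hc; rwa [abs_of_pos hxpos] at hh)
      have h2 : ∀ c, F.D c = 0 → c < -y := fun c hc =>
        lt_of_le_of_lt (le_abs_self c) (by have hh := hygt c hc; rwa [abs_of_neg hyneg] at hh)
      have h3 : F.Smallo x (-y) := fun c hc => by
        rw [abs_neg]; exact hxy c hc
      have h := F.main x (-y) h1 h2 h3
      intro c hc
      have h' := h c hc
      rwa [F.Dneg, abs_neg] at h'
    · -- x > 0, y > 0
      have h1 : ∀ c, F.D c = 0 → c < x := fun c hc =>
        lt_of_le_of_lt (le_abs_self c) (by have hh := hxgt c hc; rwa [abs_of_pos hxpos] at hh)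
      have h2 : ∀ c, F.D c = 0 → c < y := fun c hc =>
        lt_of_le_of_lt (le_abs_self c) (by have hh := hygt c hc; rwa [abs_of_pos hypos] at hh)
      exact F.main x y h1 h2 hxy
end
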